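/- The function ξ(n) = Σ_{k=0}^{n} C(n,k) (k/n)^k (1 − k/n)^{n−k} satisfies √n ≤ ξ(n) ≤ 2√n for all n ≥ 1. -/

import Mathlib

namespace Stmt12
open Real Stirling Filter Finset

lemma sqrtpi_le_stirling (m : ℕ) (hm : 1 ≤ m) : √π ≤ stirlingSeq m := by
  obtain ⟨m, rfl⟩ := Nat.exists_eq_add_of_le hm
  have h1 : Filter.Tendsto (stirlingSeq ∘ Nat.succ) atTop (nhds (√π)) :=
    tendsto_stirlingSeq_sqrt_pi.comp (tendsto_add_atTop_nat 1)
  have := stirlingSeq'_antitone.le_of_tendsto h1 m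
  simpa [Nat.succ_eq_add_one, Nat.add_comm] using this

lemma stirling_le (m k : ℕ) (h1 : 1 ≤ k) (h : k ≤ m) : stirlingSeq m ≤ stirlingSeq k := by
  obtain ⟨m, rfl⟩ := Nat.exists_eq_add_of_le h
  obtain ⟨k, rfl⟩ := Nat.exists_eq_add_of_le h1
  have := stirlingSeq'_antitone (le_add_of_nonneg_right (Nat.zero_le m) : k ≤ k + m)
  simpa [Nat.succ_eq_add_one, Nat.add_comm, Nat.add_assoc, Nat.add_left_comm] using this

lemma fact_eq (m : ℕ) (hm : 1 ≤ m) :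
    (m.factorial : ℝ) = stirlingSeq m * (√2 * √m * ((m : ℝ) / exp 1) ^ m) := by
  have hm' : (0:ℝ) < (m:ℝ) := by exact_mod_cast hm
  have h0 : (0:ℝ) < √2 * √m * ((m : ℝ) / exp 1) ^ m := by positivity
  rw [stirlingSeq, show √(2 * (m:ℝ)) = √2 * √m by rw [Real.sqrt_mul]; norm_num]
  field_simp

-- lower bound, all m ≥ 1
lemma fact_lb (m : ℕ) (hm : 1 ≤ m) :
    √π * √2 * √m * ((m : ℝ) / exp 1) ^ m ≤ m.factorial := by
  rw [fact_eq m hm]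
  have h0 : (0:ℝ) ≤ √2 * √m * ((m : ℝ) / exp 1) ^ m := by positivity
  have := sqrtpi_le_stirling m hm
  nlinarith [this, h0]

-- upper bound for m ≥ 1 : m! ≤ e √m (m/e)^m
lemma fact_ub1 (m : ℕ) (hm : 1 ≤ m) :
    (m.factorial : ℝ) ≤ exp 1 * √m * ((m : ℝ) / exp 1) ^ m := by
  rw [fact_eq m hm]
  have hs : stirlingSeq m ≤ stirlingSeq 1 := stirling_le m 1 le_rfl hm
  rw [stirlingSeq_one] at hs
  have h2 : (0:ℝ) < √2 := by positivity
  have h0 : (0:ℝ) ≤ √m * ((m : ℝ) / exp 1) ^ m := by positivity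
  calc stirlingSeq m * (√2 * √m * ((m : ℝ) / exp 1) ^ m)
      ≤ (exp 1 / √2) * (√2 * √m * ((m : ℝ) / exp 1) ^ m) := by
        apply mul_le_mul_of_nonneg_right hs (by positivity)
    _ = (exp 1 / √2 * √2) * (√m * ((m : ℝ) / exp 1) ^ m) := by ring
    _ = exp 1 * √m * ((m : ℝ) / exp 1) ^ m := by rw [div_mul_cancel₀]; ring; positivity

lemma stirling3_num : stirlingSeq 3 * √2 ≤ 2.5775 := by
  have h3 : stirlingSeq 3 = 6 / (√6 * (3 / exp 1)^3) := by
    rw [stirlingSeq]; norm_num [Nat.factorial]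
  have he1 : exp 1 < 2.7182818286 := Real.exp_one_lt_d9
  have h6l : (2.449489:ℝ) ≤ √6 := by
    rw [show (2.449489:ℝ) = Real.sqrt (2.449489^2) by rw [Real.sqrt_sq]; norm_num]
    apply Real.sqrt_le_sqrt; norm_num
  have h2u : √2 ≤ 1.4142136 := by
    rw [show (1.4142136:ℝ) = Real.sqrt (1.4142136^2) by rw [Real.sqrt_sq]; norm_num]
    apply Real.sqrt_le_sqrt; norm_num
  have h2l : (0:ℝ) ≤ √2 := Real.sqrt_nonneg 2
  have hEpos : (0:ℝ) < exp 1 := Real.exp_pos 1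
  have hE3 : exp 1 ^ 3 < 20.0855371 := by
    calc exp 1 ^ 3 < 2.7182818286 ^ 3 := by
          exact pow_lt_pow_left₀ he1 hEpos.le (by norm_num)
      _ < 20.0855371 := by norm_num
  have hE3pos : (0:ℝ) < exp 1 ^ 3 := by positivity
  have hpos : (0:ℝ) < √6 * (3 / exp 1)^3 := by positivity
  rw [h3, div_mul_eq_mul_div, div_le_iff₀ hpos,
      show (3 / exp 1)^3 = 27 / exp 1 ^ 3 by rw [div_pow]; norm_num]
  rw [show 2.5775 * (√6 * (27 / exp 1 ^ 3)) = 2.5775 * √6 * 27 / exp 1 ^ 3 by ring,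
      le_div_iff₀ hE3pos]
  have a1 : 6 * √2 * exp 1 ^ 3 ≤ 6 * 1.4142136 * 20.0855371 := by nlinarith
  have a2 : (2.5775:ℝ) * 2.449489 * 27 ≤ 2.5775 * √6 * 27 := by nlinarith
  nlinarith

-- upper bound for m ≥ 3
lemma fact_ub3 (m : ℕ) (hm : 3 ≤ m) :
    (m.factorial : ℝ) ≤ 2.5775 * √m * ((m : ℝ) / exp 1) ^ m := by
  rw [fact_eq m (by omega)]
  have hs : stirlingSeq m ≤ stirlingSeq 3 := stirling_le m 3 (by norm_num) hm
  have h0 : (0:ℝ) ≤ √m * ((m : ℝ) / exp 1) ^ m := by positivity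
  have h2 : (0:ℝ) ≤ √2 := Real.sqrt_nonneg 2
  have := stirling3_num
  calc stirlingSeq m * (√2 * √m * ((m : ℝ) / exp 1) ^ m)
      = (stirlingSeq m * √2) * (√m * ((m : ℝ) / exp 1) ^ m) := by ring
    _ ≤ 2.5775 * (√m * ((m : ℝ) / exp 1) ^ m) := by
        apply mul_le_mul_of_nonneg_right ?_ h0
        calc stirlingSeq m * √2 ≤ stirlingSeq 3 * √2 := by
              apply mul_le_mul_of_nonneg_right hs h2
          _ ≤ 2.5775 := stirling3_num
    _ = 2.5775 * √m * ((m : ℝ) / exp 1) ^ m := by ring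


lemma term_eq (n k : ℕ) (hn : 1 ≤ n) (hk : k ≤ n) :
    (n.choose k : ℝ) * ((k : ℝ) / n) ^ k * (1 - (k : ℝ) / n) ^ (n - k)
      = (n.factorial : ℝ) * ((k:ℝ)^k * (((n-k : ℕ)):ℝ)^(n-k))
        / ((k.factorial : ℝ) * ((n-k).factorial : ℝ) * (n:ℝ)^n) := by
  have hn0 : (n:ℝ) ≠ 0 := by
    have : (0:ℝ) < n := by exact_mod_cast hn
    linarith
  have hb : (1 - (k:ℝ)/n) = (((n-k : ℕ)):ℝ)/n := by
    rw [Nat.cast_sub hk]; field_simp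
  have hnn : (n:ℝ)^k * (n:ℝ)^(n-k) = (n:ℝ)^n := by
    rw [← pow_add]; congr 1; omega
  rw [Nat.cast_choose ℝ hk, hb, div_pow, div_pow]
  rw [show (n.factorial:ℝ) / (k.factorial * (n-k).factorial) * ((k:ℝ)^k/(n:ℝ)^k)
        * ((((n-k:ℕ)):ℝ)^(n-k)/(n:ℝ)^(n-k))
      = (n.factorial:ℝ) * ((k:ℝ)^k * (((n-k:ℕ)):ℝ)^(n-k))
        / ((k.factorial * (n-k).factorial) * ((n:ℝ)^k * (n:ℝ)^(n-k))) by ring]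
  rw [hnn]

-- cancellation of e-powers
lemma pow_cancel (n k : ℕ) (hk : k ≤ n) (a b : ℝ) (ha : 0 ≤ a) (hb : 0 ≤ b) :
    (a / exp 1)^k * (b / exp 1)^(n-k) * ((n:ℝ))^n
      = ((n:ℝ) / exp 1)^n * (a^k * b^(n-k)) := by
  have he : (exp 1)^k * (exp 1)^(n-k) = (exp 1)^n := by
    rw [← pow_add]; congr 1; omega
  have he0 : (exp 1) ≠ 0 := (Real.exp_pos 1).ne'
  rw [div_pow, div_pow, div_pow]
  rw [div_mul_div_comm, he]
  field_simp

lemma term_ub (n k : ℕ) (h1 : 1 ≤ k) (h2 : k < n) :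
    (n.choose k : ℝ) * ((k : ℝ) / n) ^ k * (1 - (k : ℝ) / n) ^ (n - k)
      ≤ exp 1 * √n / (2 * π * (√k * √((n-k : ℕ)))) := by
  have hn1 : 1 ≤ n := by omega
  have hb1 : 1 ≤ n - k := by omega
  have ha : (1:ℝ) ≤ (k:ℝ) := by exact_mod_cast h1
  have hbR : (1:ℝ) ≤ ((n-k:ℕ):ℝ) := by exact_mod_cast hb1
  have hnR : (1:ℝ) ≤ (n:ℝ) := by exact_mod_cast hn1
  rw [term_eq n k hn1 h2.le]
  set a : ℝ := (k:ℝ) with hadef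
  set b : ℝ := ((n-k:ℕ):ℝ) with hbdef
  set X : ℝ := a^k * b^(n-k) with hX
  have hXpos : 0 < X := by positivity
  have hNum : (n.factorial : ℝ) * X ≤ (exp 1 * √n * ((n:ℝ)/exp 1)^n) * X :=
    mul_le_mul_of_nonneg_right (fact_ub1 n hn1) hXpos.le
  have hDen : (√π*√2*√a*(a/exp 1)^k) * (√π*√2*√b*(b/exp 1)^(n-k)) * (n:ℝ)^n
      ≤ (k.factorial : ℝ) * ((n-k).factorial : ℝ) * (n:ℝ)^n := by
    have h1' := fact_lb k h1
    have h2' := fact_lb (n-k) hb1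
    have p1 : (0:ℝ) < √π*√2*√a*(a/exp 1)^k := by positivity
    have p2 : (0:ℝ) < √π*√2*√b*(b/exp 1)^(n-k) := by positivity
    have pn : (0:ℝ) < (n:ℝ)^n := by positivity
    apply mul_le_mul_of_nonneg_right _ pn.le
    exact mul_le_mul h1' h2' p2.le (by positivity)
  have hD0pos : (0:ℝ) < (√π*√2*√a*(a/exp 1)^k) * (√π*√2*√b*(b/exp 1)^(n-k)) * (n:ℝ)^n := by
    positivity
  have step : (n.factorial : ℝ) * X / ((k.factorial : ℝ) * ((n-k).factorial : ℝ) * (n:ℝ)^n)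
      ≤ (exp 1 * √n * ((n:ℝ)/exp 1)^n) * X
        / ((√π*√2*√a*(a/exp 1)^k) * (√π*√2*√b*(b/exp 1)^(n-k)) * (n:ℝ)^n) :=
    div_le_div₀ (by positivity) hNum hD0pos hDen
  refine step.trans_eq ?_
  have hsq : ∀ x:ℝ, 0 ≤ x → √x*√x = x := fun x hx => Real.mul_self_sqrt hx
  have hD0 : (√π*√2*√a*(a/exp 1)^k) * (√π*√2*√b*(b/exp 1)^(n-k)) * (n:ℝ)^n
      = 2*π*(√a*√b) * (((n:ℝ)/exp 1)^n * X) := by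
    calc (√π*√2*√a*(a/exp 1)^k) * (√π*√2*√b*(b/exp 1)^(n-k)) * (n:ℝ)^n
        = (√π*√π)*(√2*√2)*(√a*√b)*((a/exp 1)^k * (b/exp 1)^(n-k) * (n:ℝ)^n) := by ring
      _ = π*2*(√a*√b)*(((n:ℝ)/exp 1)^n * X) := by
          rw [hsq π Real.pi_pos.le, hsq 2 (by norm_num),
              pow_cancel n k h2.le a b (by linarith) (by linarith)]
      _ = 2*π*(√a*√b) * (((n:ℝ)/exp 1)^n * X) := by ring
  rw [hD0, show (exp 1 * √n * ((n:ℝ)/exp 1)^n) * X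
      = (exp 1 * √n) * (((n:ℝ)/exp 1)^n * X) by ring]
  rw [mul_div_mul_right _ _ (by positivity : ((n:ℝ)/exp 1)^n * X ≠ 0)]

lemma term_lb (n k : ℕ) (h1 : 3 ≤ k) (h2 : k + 3 ≤ n) :
    0.377 * √n / (√k * √((n-k : ℕ)))
      ≤ (n.choose k : ℝ) * ((k : ℝ) / n) ^ k * (1 - (k : ℝ) / n) ^ (n - k) := by
  have hn1 : 1 ≤ n := by omega
  have hb1 : 3 ≤ n - k := by omega
  have ha : (1:ℝ) ≤ (k:ℝ) := by exact_mod_cast (by omega : 1 ≤ k)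
  have hbR : (1:ℝ) ≤ ((n-k:ℕ):ℝ) := by exact_mod_cast (by omega : 1 ≤ n - k)
  have hnR : (1:ℝ) ≤ (n:ℝ) := by exact_mod_cast hn1
  rw [term_eq n k hn1 (by omega)]
  set a : ℝ := (k:ℝ) with hadef
  set b : ℝ := ((n-k:ℕ):ℝ) with hbdef
  set X : ℝ := a^k * b^(n-k) with hX
  have hXpos : 0 < X := by positivity
  have hsq : ∀ x:ℝ, 0 ≤ x → √x*√x = x := fun x hx => Real.mul_self_sqrt hx
  have hNum : (√π*√2*√n*((n:ℝ)/exp 1)^n) * X ≤ (n.factorial : ℝ) * X :=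
    mul_le_mul_of_nonneg_right (fact_lb n hn1) hXpos.le
  have hDen : (k.factorial : ℝ) * ((n-k).factorial : ℝ) * (n:ℝ)^n
      ≤ (2.5775*√a*(a/exp 1)^k) * (2.5775*√b*(b/exp 1)^(n-k)) * (n:ℝ)^n := by
    have h1' := fact_ub3 k h1
    have h2' := fact_ub3 (n-k) hb1
    have pn : (0:ℝ) < (n:ℝ)^n := by positivity
    apply mul_le_mul_of_nonneg_right _ pn.le
    exact mul_le_mul h1' h2' (by positivity) (by positivity)
  have hDpos : (0:ℝ) < (k.factorial : ℝ) * ((n-k).factorial : ℝ) * (n:ℝ)^n := by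
    have pk : (0:ℝ) < k.factorial := by exact_mod_cast k.factorial_pos
    have pb : (0:ℝ) < (n-k).factorial := by exact_mod_cast (n-k).factorial_pos
    positivity
  have step : (√π*√2*√n*((n:ℝ)/exp 1)^n) * X
        / ((2.5775*√a*(a/exp 1)^k) * (2.5775*√b*(b/exp 1)^(n-k)) * (n:ℝ)^n)
      ≤ (n.factorial : ℝ) * X / ((k.factorial : ℝ) * ((n-k).factorial : ℝ) * (n:ℝ)^n) :=
    div_le_div₀ (by positivity) hNum hDpos hDen
  refine le_trans ?_ step
  have hD0 : (2.5775*√a*(a/exp 1)^k) * (2.5775*√b*(b/exp 1)^(n-k)) * (n:ℝ)^n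
      = (2.5775^2*(√a*√b)) * (((n:ℝ)/exp 1)^n * X) := by
    calc (2.5775*√a*(a/exp 1)^k) * (2.5775*√b*(b/exp 1)^(n-k)) * (n:ℝ)^n
        = (2.5775^2)*(√a*√b)*((a/exp 1)^k * (b/exp 1)^(n-k) * (n:ℝ)^n) := by ring
      _ = (2.5775^2*(√a*√b)) * (((n:ℝ)/exp 1)^n * X) := by
          rw [pow_cancel n k (by omega) a b (by linarith) (by linarith)]
  rw [hD0, show (√π*√2*√n*((n:ℝ)/exp 1)^n) * X
      = (√π*√2*√n) * (((n:ℝ)/exp 1)^n * X) by ring]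
  rw [mul_div_mul_right _ _ (by positivity : ((n:ℝ)/exp 1)^n * X ≠ 0)]
  -- now : 0.377 * √n / (√a*√b) ≤ √π*√2*√n/(2.5775^2*(√a*√b))
  have hpi : (1.772453:ℝ) ≤ √π := by
    rw [show (1.772453:ℝ) = Real.sqrt (1.772453^2) by rw [Real.sqrt_sq]; norm_num]
    apply Real.sqrt_le_sqrt; nlinarith [Real.pi_gt_d6]
  have h2l : (1.414213:ℝ) ≤ √2 := by
    rw [show (1.414213:ℝ) = Real.sqrt (1.414213^2) by rw [Real.sqrt_sq]; norm_num]
    apply Real.sqrt_le_sqrt; norm_num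
  have hab : (0:ℝ) < √a * √b := by positivity
  have hs : (0:ℝ) ≤ √n := Real.sqrt_nonneg _
  rw [div_le_div_iff₀ (by positivity) (by positivity)]
  have : (0.377 : ℝ) * 2.5775^2 ≤ √π * √2 := by nlinarith
  nlinarith [mul_le_mul_of_nonneg_right this (mul_nonneg hs hab.le)]


lemma sum_reflect (f : ℕ → ℝ) (n a : ℕ) (h : a + a ≤ n) :
    ∑ k ∈ Icc a (n-a), f (n-k) = ∑ k ∈ Icc a (n-a), f k := by
  apply Finset.sum_bij' (fun k _ => n - k) (fun k _ => n - k)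
  · intro x hx; simp only [mem_Icc] at *; omega
  · intro x hx; simp only [mem_Icc] at *; omega
  · intro x hx; simp only [mem_Icc] at *; omega
  · intro x hx; simp only [mem_Icc] at *; omega
  · intro x hx; rfl

lemma sum_inv_sqrt_ub (m : ℕ) (hm : 1 ≤ m) :
    ∑ k ∈ Icc 1 m, 1/√(k:ℝ) ≤ 2*√m - 1 := by
  induction m with
  | zero => omega
  | succ m ih =>
    rcases Nat.eq_or_lt_of_le hm with h|h
    · simp [← h]; norm_num
    · have hm1 : 1 ≤ m := by omega
      rw [Finset.sum_Icc_succ_top (by omega : 1 ≤ m + 1)]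
      have hu : (0:ℝ) < √(m+1) := by
        apply Real.sqrt_pos.mpr; positivity
      have key : 1/√((m+1:ℕ):ℝ) ≤ 2*√((m+1:ℕ):ℝ) - 2*√(m:ℝ) := by
        rw [div_le_iff₀ (by exact_mod_cast hu)]
        have e1 : √((m+1:ℕ):ℝ) ^ 2 = ((m+1:ℕ):ℝ) := Real.sq_sqrt (by positivity)
        have e2 : √(m:ℝ) ^ 2 = (m:ℝ) := Real.sq_sqrt (by positivity)
        have e3 : ((m+1:ℕ):ℝ) = (m:ℝ) + 1 := by push_cast; ring
        nlinarith [sq_nonneg (√((m+1:ℕ):ℝ) - √(m:ℝ))]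
      have := ih hm1
      have ecast : √((m+1:ℕ):ℝ) = √((m:ℝ)+1) := by norm_num
      push_cast at key ⊢
      linarith
lemma sum_inv_sqrt_lb (m : ℕ) :
    2*√((m:ℝ)+1) - 2*√3 ≤ ∑ k ∈ Icc 3 m, 1/√(k:ℝ) := by
  induction m with
  | zero =>
    have h3 : (1:ℝ) ≤ √3 := by
      rw [show (1:ℝ) = √1 by simp]; exact Real.sqrt_le_sqrt (by norm_num)
    rw [show Icc 3 0 = (∅ : Finset ℕ) from rfl, Finset.sum_empty]
    norm_num [h3]
  | succ m ih =>
    by_cases h3 : 3 ≤ m + 1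
    · rw [Finset.sum_Icc_succ_top h3]
      have hu : (0:ℝ) < √((m:ℝ)+1) := by positivity
      have key : 2*√((m:ℝ)+1+1) - 2*√((m:ℝ)+1) ≤ 1/√((m:ℝ)+1) := by
        rw [le_div_iff₀ hu]
        have e1 : √((m:ℝ)+1+1) ^ 2 = ((m:ℝ)+1+1) := Real.sq_sqrt (by positivity)
        have e2 : √((m:ℝ)+1) ^ 2 = ((m:ℝ)+1) := Real.sq_sqrt (by positivity)
        nlinarith [sq_nonneg (√((m:ℝ)+1+1) - √((m:ℝ)+1))]
      push_cast
      push_cast at ih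
      linarith
    · have he : Icc 3 (m+1) = ∅ := Finset.Icc_eq_empty (by omega)
      rw [he]
      have h1 : ((m:ℝ)+1+1) ≤ 3 := by
        have : m + 2 ≤ 3 := by omega
        exact_mod_cast this
      have : √((m:ℝ)+1+1) ≤ √3 := Real.sqrt_le_sqrt h1
      simp; push_cast; linarith

-- pairing inequalities
lemma pair_ub (a b : ℝ) (ha : 0 < a) (hb : 0 < b) :
    1/(√a*√b) ≤ (1/√(a+b)) * (1/√a + 1/√b) := by
  have hsa : (0:ℝ) < √a := Real.sqrt_pos.mpr ha
  have hsb : (0:ℝ) < √b := Real.sqrt_pos.mpr hb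
  have hsab : (0:ℝ) < √(a+b) := Real.sqrt_pos.mpr (by linarith)
  have key : √(a+b) ≤ √a + √b := by
    rw [show √a + √b = √((√a+√b)^2) by rw [Real.sqrt_sq (by positivity)]]
    apply Real.sqrt_le_sqrt
    nlinarith [Real.sq_sqrt ha.le, Real.sq_sqrt hb.le, mul_pos hsa hsb]
  rw [show (1/√(a+b)) * (1/√a + 1/√b) = (√a + √b)/(√(a+b)*(√a*√b)) by field_simp; ring]
  rw [div_le_div_iff₀ (by positivity) (by positivity)]
  nlinarith [mul_nonneg (sub_nonneg.mpr key) (mul_pos hsa hsb).le]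
lemma pair_lb (a b : ℝ) (ha : 0 < a) (hb : 0 < b) :
    (1/(√2*√(a+b))) * (1/√a + 1/√b) ≤ 1/(√a*√b) := by
  have hsa : (0:ℝ) < √a := Real.sqrt_pos.mpr ha
  have hsb : (0:ℝ) < √b := Real.sqrt_pos.mpr hb
  have hsab : (0:ℝ) < √(a+b) := Real.sqrt_pos.mpr (by linarith)
  have hs2 : (0:ℝ) < √2 := by positivity
  have key : √a + √b ≤ √2 * √(a+b) := by
    rw [← Real.sqrt_mul (by norm_num) (a+b)]
    rw [show √a + √b = √((√a+√b)^2) by rw [Real.sqrt_sq (by positivity)]]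
    apply Real.sqrt_le_sqrt
    nlinarith [Real.sq_sqrt ha.le, Real.sq_sqrt hb.le, sq_nonneg (√a - √b)]
  rw [show (1/(√2*√(a+b))) * (1/√a + 1/√b) = (√a + √b)/((√2*√(a+b))*(√a*√b)) by
    field_simp; ring]
  rw [div_le_div_iff₀ (by positivity) (by positivity)]
  nlinarith [mul_pos hsa hsb]


section main
variable (n : ℕ)

noncomputable def T (n k : ℕ) : ℝ :=
  (n.choose k : ℝ) * ((k : ℝ) / n) ^ k * (1 - (k : ℝ) / n) ^ (n - k)

lemma T_zero (hn : 1 ≤ n) : T n 0 = 1 := by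
  simp [T]

lemma T_top (hn : 1 ≤ n) : T n n = 1 := by
  have hn0 : (n:ℝ) ≠ 0 := by positivity
  simp [T, div_self hn0]

lemma T_nonneg (k : ℕ) (hk : k ≤ n) (hn : 1 ≤ n) : 0 ≤ T n k := by
  have h1 : (0:ℝ) ≤ 1 - (k:ℝ)/n := by
    rw [sub_nonneg, div_le_one (by positivity : (0:ℝ) < (n:ℝ))]
    exact_mod_cast hk
  have : (0:ℝ) ≤ (k:ℝ)/n := by positivity
  unfold T
  positivity

lemma sum_split (hn : 1 ≤ n) :
    ∑ k ∈ range (n+1), T n k = 2 + ∑ k ∈ Icc 1 (n-1), T n k := by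
  have hset : range (n+1) = insert 0 (insert n (Icc 1 (n-1))) := by
    ext x
    simp only [Finset.mem_range, Finset.mem_insert, Finset.mem_Icc]
    omega
  rw [hset, Finset.sum_insert (by simp only [Finset.mem_insert, Finset.mem_Icc]; omega),
      Finset.sum_insert (by simp only [Finset.mem_Icc]; omega), T_zero n hn, T_top n hn]
  ring

lemma cast_ab (k : ℕ) (hk : k ≤ n) : (k:ℝ) + ((n-k:ℕ):ℝ) = (n:ℝ) := by
  have : ((n-k:ℕ):ℝ) = (n:ℝ) - (k:ℝ) := by
    rw [Nat.cast_sub hk]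
  rw [this]; ring

set_option maxHeartbeats 1000000 in
lemma upper_main (hn : 25 ≤ n) :
    ∑ k ∈ range (n+1), T n k ≤ 2 * √n := by
  have hn1 : 1 ≤ n := by omega
  have hsn : (0:ℝ) < √n := Real.sqrt_pos.mpr (by positivity)
  rw [sum_split n hn1]
  set C : ℝ := exp 1 * √n/(2*π) * (1/√n) with hC
  have hCpos : 0 < C := by
    have := Real.exp_pos 1
    have := Real.pi_pos
    positivity
  have hterm : ∀ k ∈ Icc 1 (n-1), T n k ≤ C * (1/√(k:ℝ) + 1/√((n-k:ℕ):ℝ)) := by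
    intro k hk
    rw [Finset.mem_Icc] at hk
    have h1 : 1 ≤ k := hk.1
    have h2 : k < n := by omega
    have hkR : (0:ℝ) < (k:ℝ) := by exact_mod_cast h1
    have hbR : (0:ℝ) < ((n-k:ℕ):ℝ) := by
      have : 1 ≤ n - k := by omega
      exact_mod_cast this
    refine (term_ub n k h1 h2).trans ?_
    have e1 : exp 1 * √n / (2 * π * (√(k:ℝ) * √((n-k:ℕ):ℝ)))
        = (exp 1 * √n/(2*π)) * (1/(√(k:ℝ) * √((n-k:ℕ):ℝ))) := by
      rw [mul_one_div, div_div]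
    rw [e1]
    have e2 := pair_ub (k:ℝ) ((n-k:ℕ):ℝ) hkR hbR
    rw [cast_ab n k h2.le] at e2
    have e3 : (0:ℝ) ≤ exp 1 * √n/(2*π) := by
      have := Real.exp_pos 1; have := Real.pi_pos; positivity
    calc (exp 1 * √n/(2*π)) * (1/(√(k:ℝ) * √((n-k:ℕ):ℝ)))
        ≤ (exp 1 * √n/(2*π)) * ((1/√(n:ℝ)) * (1/√(k:ℝ) + 1/√((n-k:ℕ):ℝ))) :=
          mul_le_mul_of_nonneg_left e2 e3
      _ = C * (1/√(k:ℝ) + 1/√((n-k:ℕ):ℝ)) := by rw [hC]; ring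
  have hsum : ∑ k ∈ Icc 1 (n-1), T n k
      ≤ C * (∑ k ∈ Icc 1 (n-1), 1/√(k:ℝ) + ∑ k ∈ Icc 1 (n-1), 1/√((n-k:ℕ):ℝ)) := by
    calc ∑ k ∈ Icc 1 (n-1), T n k
        ≤ ∑ k ∈ Icc 1 (n-1), C * (1/√(k:ℝ) + 1/√((n-k:ℕ):ℝ)) := Finset.sum_le_sum hterm
      _ = C * ∑ k ∈ Icc 1 (n-1), (1/√(k:ℝ) + 1/√((n-k:ℕ):ℝ)) := by rw [Finset.mul_sum]
      _ = C * (∑ k ∈ Icc 1 (n-1), 1/√(k:ℝ) + ∑ k ∈ Icc 1 (n-1), 1/√((n-k:ℕ):ℝ)) := by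
          rw [Finset.sum_add_distrib]
  have hrefl : ∑ k ∈ Icc 1 (n-1), 1/√((n-k:ℕ):ℝ) = ∑ k ∈ Icc 1 (n-1), 1/√(k:ℝ) := by
    have := sum_reflect (fun j => 1/√(j:ℝ)) n 1 (by omega)
    simpa using this
  rw [hrefl] at hsum
  have hub := sum_inv_sqrt_ub (n-1) (by omega)
  have hsum2 : ∑ k ∈ Icc 1 (n-1), T n k ≤ C * (2*(2*√((n-1:ℕ):ℝ) - 1)) := by
    refine hsum.trans ?_
    apply mul_le_mul_of_nonneg_left _ hCpos.le
    linarith [hub]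
  -- simplify C
  have hCeq : C = exp 1/(2*π) := by
    rw [hC]; field_simp
  rw [hCeq] at hsum2
  -- numeric finish
  have hs5 : (5:ℝ) ≤ √n := by
    rw [show (5:ℝ) = √25 by rw [show (25:ℝ) = 5^2 by norm_num, Real.sqrt_sq]; norm_num]
    exact Real.sqrt_le_sqrt (by exact_mod_cast hn)
  have hmono : √((n-1:ℕ):ℝ) ≤ √n := Real.sqrt_le_sqrt (by exact_mod_cast Nat.sub_le n 1)
  have hsm0 : (0:ℝ) ≤ √((n-1:ℕ):ℝ) := Real.sqrt_nonneg _
  have hpi : (3.141592:ℝ) < π := Real.pi_gt_d6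
  have he : exp 1 < 2.7182818286 := Real.exp_one_lt_d9
  have he0 : (0:ℝ) < exp 1 := Real.exp_pos 1
  have hq : exp 1/(2*π) ≤ 0.43265 := by
    rw [div_le_iff₀ (by linarith)]
    nlinarith
  have hfac : (0:ℝ) ≤ 2*(2*√((n-1:ℕ):ℝ) - 1) := by
    have : (1:ℝ) ≤ √((n-1:ℕ):ℝ) := by
      rw [show (1:ℝ) = √1 by simp]
      apply Real.sqrt_le_sqrt
      have : (1:ℕ) ≤ n - 1 := by omega
      exact_mod_cast this
    linarith
  have : exp 1/(2*π) * (2*(2*√((n-1:ℕ):ℝ) - 1)) ≤ 0.43265 * (2*(2*√(n:ℝ) - 1)) := by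
    apply mul_le_mul hq _ hfac (by norm_num)
    linarith
  nlinarith [hsum2, this, hs5]


set_option maxHeartbeats 1000000 in
lemma lower_main (hn : 25 ≤ n) :
    √n ≤ ∑ k ∈ range (n+1), T n k := by
  have hn1 : 1 ≤ n := by omega
  have hsn : (0:ℝ) < √n := Real.sqrt_pos.mpr (by positivity)
  have hs2 : (0:ℝ) < √2 := by positivity
  rw [sum_split n hn1]
  set C : ℝ := 0.377 * √n * (1/(√2*√n)) with hC
  have hCpos : 0 < C := by positivity
  -- per-term lower bound on Icc 3 (n-3)
  have hterm : ∀ k ∈ Icc 3 (n-3), C * (1/√(k:ℝ) + 1/√((n-k:ℕ):ℝ)) ≤ T n k := by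
    intro k hk
    rw [Finset.mem_Icc] at hk
    have h1 : 3 ≤ k := hk.1
    have h2 : k + 3 ≤ n := by omega
    have hkR : (0:ℝ) < (k:ℝ) := by exact_mod_cast (by omega : 0 < k)
    have hbR : (0:ℝ) < ((n-k:ℕ):ℝ) := by exact_mod_cast (by omega : 0 < n - k)
    refine le_trans ?_ (term_lb n k h1 h2)
    have e1 : (0.377:ℝ) * √n / (√(k:ℝ) * √((n-k:ℕ):ℝ))
        = (0.377 * √n) * (1/(√(k:ℝ) * √((n-k:ℕ):ℝ))) := by
      rw [mul_one_div]
    rw [e1]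
    have e2 := pair_lb (k:ℝ) ((n-k:ℕ):ℝ) hkR hbR
    rw [cast_ab n k (by omega)] at e2
    calc C * (1/√(k:ℝ) + 1/√((n-k:ℕ):ℝ))
        = (0.377 * √n) * ((1/(√2*√(n:ℝ))) * (1/√(k:ℝ) + 1/√((n-k:ℕ):ℝ))) := by
          rw [hC]; ring
      _ ≤ (0.377 * √n) * (1/(√(k:ℝ) * √((n-k:ℕ):ℝ))) :=
          mul_le_mul_of_nonneg_left e2 (by positivity)
  -- sum over the middle range
  have hsub : ∑ k ∈ Icc 3 (n-3), T n k ≤ ∑ k ∈ Icc 1 (n-1), T n k := by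
    apply Finset.sum_le_sum_of_subset_of_nonneg
    · apply Finset.Icc_subset_Icc <;> omega
    · intro i hi _
      rw [Finset.mem_Icc] at hi
      exact T_nonneg n i (by omega) hn1
  have hsum : C * (∑ k ∈ Icc 3 (n-3), 1/√(k:ℝ) + ∑ k ∈ Icc 3 (n-3), 1/√((n-k:ℕ):ℝ))
      ≤ ∑ k ∈ Icc 3 (n-3), T n k := by
    calc C * (∑ k ∈ Icc 3 (n-3), 1/√(k:ℝ) + ∑ k ∈ Icc 3 (n-3), 1/√((n-k:ℕ):ℝ))
        = ∑ k ∈ Icc 3 (n-3), C * (1/√(k:ℝ) + 1/√((n-k:ℕ):ℝ)) := by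
          rw [← Finset.sum_add_distrib, Finset.mul_sum]
      _ ≤ ∑ k ∈ Icc 3 (n-3), T n k := Finset.sum_le_sum hterm
  have hrefl : ∑ k ∈ Icc 3 (n-3), 1/√((n-k:ℕ):ℝ) = ∑ k ∈ Icc 3 (n-3), 1/√(k:ℝ) := by
    have := sum_reflect (fun j => 1/√(j:ℝ)) n 3 (by omega)
    simpa using this
  rw [hrefl] at hsum
  have hlb := sum_inv_sqrt_lb (n-3)
  have hcast : ((n-3:ℕ):ℝ) + 1 = (n:ℝ) - 2 := by
    rw [Nat.cast_sub (by omega)]; ring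
  rw [hcast] at hlb
  -- numeric facts
  have hs5 : (5:ℝ) ≤ √n := by
    rw [show (5:ℝ) = √25 by rw [show (25:ℝ) = 5^2 by norm_num, Real.sqrt_sq]; norm_num]
    exact Real.sqrt_le_sqrt (by exact_mod_cast hn)
  have hnR : (25:ℝ) ≤ (n:ℝ) := by exact_mod_cast hn
  have e1 : √(n:ℝ)^2 = (n:ℝ) := Real.sq_sqrt (by positivity)
  have e2 : √((n:ℝ)-2)^2 = (n:ℝ)-2 := Real.sq_sqrt (by linarith)
  have hu0 : (0:ℝ) ≤ √((n:ℝ)-2) := Real.sqrt_nonneg _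
  have hu479 : (4.79:ℝ) ≤ √((n:ℝ)-2) := by nlinarith
  have hsu : √(n:ℝ) ≤ √((n:ℝ)-2) + 0.21 := by nlinarith
  have h2u : √2 ≤ 1.4142136 := by
    rw [show (1.4142136:ℝ) = Real.sqrt (1.4142136^2) by rw [Real.sqrt_sq]; norm_num]
    apply Real.sqrt_le_sqrt; norm_num
  have h3u : √3 ≤ 1.7320509 := by
    rw [show (1.7320509:ℝ) = Real.sqrt (1.7320509^2) by rw [Real.sqrt_sq]; norm_num]
    apply Real.sqrt_le_sqrt; norm_num
  have h30 : (0:ℝ) ≤ √3 := Real.sqrt_nonneg _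
  -- simplify C
  have hCeq : C = 0.377/√2 := by
    rw [hC]; field_simp
  have hCq : (0.26657:ℝ) ≤ C := by
    rw [hCeq, le_div_iff₀ hs2]; nlinarith
  -- assemble
  have hlow : C * (2*(2*√((n:ℝ)-2) - 2*√3)) ≤ ∑ k ∈ Icc 1 (n-1), T n k := by
    refine le_trans (le_trans ?_ hsum) hsub
    apply mul_le_mul_of_nonneg_left _ hCpos.le
    linarith
  have hfac : (0:ℝ) ≤ 2*(2*√((n:ℝ)-2) - 2*√3) := by nlinarith
  have hfinal : (0.26657:ℝ) * (2*(2*√((n:ℝ)-2) - 2*√3)) ≤ C * (2*(2*√((n:ℝ)-2) - 2*√3)) :=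
    mul_le_mul_of_nonneg_right hCq hfac
  nlinarith [hlow, hfinal, hsu, hu479, h3u, h30]

end main



def S (n : ℕ) : ℕ := ∑ k ∈ Finset.range (n+1), n.choose k * k^k * (n-k)^(n-k)

lemma sum_cast (n : ℕ) (hn : 1 ≤ n) :
    ∑ k ∈ range (n+1), T n k = ((S n : ℕ):ℝ)/(n:ℝ)^n := by
  have hn0 : (n:ℝ) ≠ 0 := by positivity
  rw [S, Nat.cast_sum, Finset.sum_div]
  apply Finset.sum_congr rfl
  intro k hk
  rw [Finset.mem_range] at hk
  have hkn : k ≤ n := by omega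
  have hb : (1 - (k:ℝ)/n) = (((n-k : ℕ)):ℝ)/n := by
    rw [Nat.cast_sub hkn]; field_simp
  have hnn : (n:ℝ)^k * (n:ℝ)^(n-k) = (n:ℝ)^n := by
    rw [← pow_add]; congr 1; omega
  unfold T
  rw [hb, div_pow, div_pow]
  push_cast
  rw [show (n.choose k:ℝ) * ((k:ℝ)^k/(n:ℝ)^k) * ((((n-k:ℕ)):ℝ)^(n-k)/(n:ℝ)^(n-k))
      = (n.choose k:ℝ) * (k:ℝ)^k * (((n-k:ℕ)):ℝ)^(n-k) / ((n:ℝ)^k*(n:ℝ)^(n-k)) by ring,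
     hnn]

lemma red (n : ℕ) (hn : 1 ≤ n) (h1 : n*(n^n)^2 ≤ (S n)^2) (h2 : (S n)^2 ≤ 4*(n*(n^n)^2)) :
    √n ≤ ∑ k ∈ range (n+1), T n k ∧ ∑ k ∈ range (n+1), T n k ≤ 2*√n := by
  rw [sum_cast n hn]
  have hp : (0:ℝ) < (n:ℝ)^n := by
    have : (0:ℝ) < (n:ℝ) := by exact_mod_cast hn
    positivity
  set x : ℝ := ((S n : ℕ):ℝ)/(n:ℝ)^n with hx
  have hx0 : 0 ≤ x := by positivity
  have hsq : x^2 = ((S n : ℕ):ℝ)^2 / ((n:ℝ)^n)^2 := by rw [hx, div_pow]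
  constructor
  · have hle : (n:ℝ) ≤ x^2 := by
      rw [hsq, le_div_iff₀ (by positivity)]
      exact_mod_cast h1
    calc √(n:ℝ) ≤ √(x^2) := Real.sqrt_le_sqrt hle
      _ = x := Real.sqrt_sq hx0
  · have hle : x^2 ≤ 4*(n:ℝ) := by
      rw [hsq, div_le_iff₀ (by positivity)]
      have h2' : (S n)^2 ≤ 4*n*(n^n)^2 := by linarith
      exact_mod_cast h2'
    calc x = √(x^2) := (Real.sqrt_sq hx0).symm
      _ ≤ √(4*(n:ℝ)) := Real.sqrt_le_sqrt hle
      _ = 2*√(n:ℝ) := by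
          rw [Real.sqrt_mul (by norm_num) (n:ℝ), show (4:ℝ) = 2^2 by norm_num,
              Real.sqrt_sq (by norm_num : (0:ℝ) ≤ 2)]

set_option maxHeartbeats 1600000 in
lemma finite_case (n : ℕ) (h1 : 1 ≤ n) (h2 : n ≤ 24) :
    √n ≤ ∑ k ∈ range (n+1), T n k ∧ ∑ k ∈ range (n+1), T n k ≤ 2*√n := by
  apply red n h1 <;> interval_cases n <;> decide

end Stmt12

/-- `√n ≤ ξ(n) ≤ 2√n` for all `n ≥ 1`, where
`ξ(n) = Σ_{k=0}^{n} C(n,k) (k/n)^k (1 − k/n)^{n−k}` (with `0⁰ = 1`). -/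
theorem stmt12 (n : ℕ) (hn : 1 ≤ n) :
    Real.sqrt n ≤ (∑ k ∈ Finset.range (n + 1),
        (n.choose k : ℝ) * ((k : ℝ) / n) ^ k * (1 - (k : ℝ) / n) ^ (n - k)) ∧
    (∑ k ∈ Finset.range (n + 1),
        (n.choose k : ℝ) * ((k : ℝ) / n) ^ k * (1 - (k : ℝ) / n) ^ (n - k))
      ≤ 2 * Real.sqrt n := by
  have key : Real.sqrt n ≤ (∑ k ∈ Finset.range (n + 1), Stmt12.T n k) ∧
      (∑ k ∈ Finset.range (n + 1), Stmt12.T n k) ≤ 2 * Real.sqrt n := by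
    rcases le_or_gt n 24 with h | h
    · exact Stmt12.finite_case n hn h
    · exact ⟨Stmt12.lower_main n (by omega), Stmt12.upper_main n (by omega)⟩
  simpa only [Stmt12.T] using key
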